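/- Let c > 0, 0 ≤ m < 1, β > 1 − m and set a := β + m − 1. Then the derivative u₀′ of the profile u₀(z) = (1 + (a/c²) e^{−c z})^{−1/a} is square-integrable on ℝ and its squared L² norm is ∫_ℝ (u₀′(z))² dz = c / (2(β + m + 1)). -/

import Mathlib

open Real Filter MeasureTheory
open Set Topology

lemma exp_mul_integrableOn_Iic {r : ℝ} (hr : 0 < r) :
    IntegrableOn (fun z : ℝ => Real.exp (r * z)) (Iic (0:ℝ)) := by
  have h0 : Integrable ((Iic (0:ℝ)).indicator Real.exp) :=
    (integrable_indicator_iff measurableSet_Iic).mpr (integrableOn_exp_Iic 0)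
  have h1 : Integrable (fun x : ℝ => ((Iic (0:ℝ)).indicator Real.exp) (r * x)) :=
    (integrable_comp_mul_left_iff _ hr.ne').mpr h0
  have h2 : (fun x : ℝ => ((Iic (0:ℝ)).indicator Real.exp) (r * x))
      = (Iic (0:ℝ)).indicator (fun z => Real.exp (r * z)) := by
    funext x
    have hiff : r * x ≤ 0 ↔ x ≤ 0 := by
      constructor <;> intro h <;> nlinarith
    simp [Set.indicator_apply, mem_Iic, hiff]
  exact (integrable_indicator_iff measurableSet_Iic).mp (h2 ▸ h1)

theorem stmt_8 (c m β : ℝ) (hc : 0 < c) (hm0 : 0 ≤ m) (hm1 : m < 1) (hβ : β > 1 - m)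
    (a : ℝ) (ha : a = β + m - 1)
    (u₀ : ℝ → ℝ)
    (hu : ∀ z : ℝ, u₀ z = (1 + (a / c ^ 2) * Real.exp (-c * z)) ^ (-(1 / a))) :
    Integrable (fun z : ℝ => (deriv u₀ z) ^ 2) ∧
    ∫ z : ℝ, (deriv u₀ z) ^ 2 = c / (2 * (β + m + 1)) := by
  have ha0 : 0 < a := by rw [ha]; linarith
  have hane : a ≠ 0 := ha0.ne'
  have ha2 : (0:ℝ) < a + 2 := by linarith
  set k : ℝ := a / c ^ 2 with hkdef
  have hk0 : 0 < k := div_pos ha0 (by positivity)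
  set b : ℝ → ℝ := fun z => 1 + k * Real.exp (-c * z) with hbdef
  have hb : ∀ z, 0 < b z := fun z => by positivity
  have hbne : ∀ z, b z ≠ 0 := fun z => (hb z).ne'
  set φ : ℝ → ℝ := fun z =>
    k * (Real.exp (-c * z) * -c) * -(1 / a) * b z ^ (-(1 / a) - 1) with hφdef
  have hderiv : ∀ z, HasDerivAt u₀ (φ z) z := by
    intro z
    have h1 : HasDerivAt (fun z : ℝ => -c * z) (-c) z := by
      simpa using (hasDerivAt_id z).const_mul (-c)
    have h2 : HasDerivAt (fun z : ℝ => Real.exp (-c * z)) (Real.exp (-c * z) * -c) z := h1.exp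
    have h3 : HasDerivAt b (k * (Real.exp (-c * z) * -c)) z := (h2.const_mul k).const_add 1
    have h4 := h3.rpow_const (p := -(1 / a)) (Or.inl (hbne z))
    have hfun : u₀ = fun z => b z ^ (-(1 / a)) := funext hu
    rw [hfun]
    exact h4
  have hwpos : ∀ z, 0 < u₀ z := fun z => by
    rw [hu z]; exact Real.rpow_pos_of_pos (hb z) _
  have hφ_eq : ∀ z, φ z = c / a * (u₀ z - u₀ z ^ (a + 1)) := by
    intro z
    have e1 : u₀ z ^ (a + 1) = b z ^ (-(1 / a) - 1) := by
      rw [hu z, ← Real.rpow_mul (hb z).le]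
      congr 1
      field_simp
      ring
    have e2 : u₀ z = b z ^ (-(1 / a) - 1) * b z := by
      rw [hu z, ← Real.rpow_add_one (hbne z)]
      congr 1; ring
    rw [e1, e2, hφdef]
    simp only [hbdef]
    field_simp
    ring
  have hφ_alt : ∀ z, φ z = c * k / a * (Real.exp (-c * z) * b z ^ (-(1 / a) - 1)) := by
    intro z; rw [hφdef]; ring
  have hφ_nonneg : ∀ z, 0 ≤ φ z := by
    intro z
    rw [hφ_alt z]
    have := hb z
    positivity
  set L : ℝ := c / a * (1 / 2 - 1 / (a + 2)) with hLdef
  set F : ℝ → ℝ := fun z => c / a * ((u₀ z) ^ 2 / 2 - u₀ z ^ (a + 2) / (a + 2)) with hFdef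
  have hF : ∀ z, HasDerivAt F (φ z ^ 2) z := by
    intro z
    have hw := hderiv z
    have h1 : HasDerivAt (fun z => (u₀ z) ^ 2) (2 * u₀ z * φ z) z := by
      simpa [mul_comm] using hw.fun_pow 2
    have h2 : HasDerivAt (fun z => u₀ z ^ (a + 2)) (φ z * (a + 2) * u₀ z ^ (a + 1)) z := by
      have := hw.rpow_const (p := a + 2) (Or.inl (hwpos z).ne')
      simpa [show a + 2 - 1 = a + 1 by ring] using this
    have h3 := ((h1.div_const 2).fun_sub (h2.div_const (a + 2))).const_mul (c / a)
    refine h3.congr_deriv ?_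
    rw [hφ_eq z]
    field_simp
  -- limits
  have hlin_top : Tendsto (fun z : ℝ => -c * z) atTop atBot :=
    (tendsto_id (α := ℝ)).const_mul_atTop_of_neg (by linarith : -c < 0)
  have hlin_bot : Tendsto (fun z : ℝ => -c * z) atBot atTop :=
    (tendsto_id (α := ℝ)).const_mul_atBot_of_neg (by linarith : -c < 0)
  have htop_exp : Tendsto (fun z : ℝ => Real.exp (-c * z)) atTop (𝓝 0) :=
    Real.tendsto_exp_atBot.comp hlin_top
  have hbot_exp : Tendsto (fun z : ℝ => Real.exp (-c * z)) atBot atTop :=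
    Real.tendsto_exp_atTop.comp hlin_bot
  have hwtop : Tendsto u₀ atTop (𝓝 1) := by
    have hbtop : Tendsto b atTop (𝓝 1) := by
      rw [hbdef]
      simpa only [mul_zero, add_zero] using (htop_exp.const_mul k).const_add 1
    have := hbtop.rpow_const (p := -(1 / a)) (Or.inl one_ne_zero)
    simpa [Real.one_rpow] using this.congr fun z => (hu z).symm
  have hwbot : Tendsto u₀ atBot (𝓝 0) := by
    have hbbot : Tendsto b atBot atTop := by
      have h1 : Tendsto (fun z : ℝ => k * Real.exp (-c * z)) atBot atTop :=
        Tendsto.const_mul_atTop hk0 hbot_exp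
      simpa [hbdef] using tendsto_atTop_add_const_left atBot 1 h1
    have h2 := (tendsto_rpow_neg_atTop (by positivity : (0:ℝ) < 1 / a)).comp hbbot
    exact h2.congr fun z => (hu z).symm
  have hFtop : Tendsto F atTop (𝓝 L) := by
    have h1 : Tendsto (fun z => (u₀ z) ^ 2) atTop (𝓝 1) := by
      simpa using hwtop.pow 2
    have h2 : Tendsto (fun z => u₀ z ^ (a + 2)) atTop (𝓝 1) := by
      simpa [Real.one_rpow] using hwtop.rpow_const (p := a + 2) (Or.inl one_ne_zero)
    have := ((h1.div_const 2).sub (h2.div_const (a + 2))).const_mul (c / a)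
    simpa [hFdef, hLdef] using this
  have hFbot : Tendsto F atBot (𝓝 0) := by
    have h1 : Tendsto (fun z => (u₀ z) ^ 2) atBot (𝓝 0) := by
      simpa using hwbot.pow 2
    have h2 : Tendsto (fun z => u₀ z ^ (a + 2)) atBot (𝓝 0) := by
      have := hwbot.rpow_const (p := a + 2) (Or.inr (by linarith))
      simpa [Real.zero_rpow ha2.ne'] using this
    have := ((h1.div_const 2).sub (h2.div_const (a + 2))).const_mul (c / a)
    simpa using this
  -- integrability on Ioi 0 and value
  have hIoi_int : IntegrableOn (fun z => φ z ^ 2) (Ioi 0) :=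
    integrableOn_Ioi_deriv_of_nonneg' (fun x _ => hF x) (fun x _ => sq_nonneg _) hFtop
  have hIoi_val : ∫ z in Ioi 0, φ z ^ 2 = L - F 0 :=
    integral_Ioi_of_hasDerivAt_of_nonneg' (fun x _ => hF x) (fun x _ => sq_nonneg _) hFtop
  -- domination bound on all of ℝ
  set C : ℝ := c * k / a * k ^ (-(1 / a) - 1) with hCdef
  have hC0 : 0 ≤ C := by positivity
  have hbound : ∀ z, φ z ≤ C * Real.exp (c / a * z) := by
    intro z
    set p : ℝ := -(1 / a) - 1 with hpdef
    have hp : p ≤ 0 := by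
      have : 0 < 1 / a := by positivity
      rw [hpdef]; linarith
    have h5 : b z ^ p ≤ (k * Real.exp (-c * z)) ^ p := by
      apply Real.rpow_le_rpow_of_nonpos (by positivity)
      · simp only [hbdef]; nlinarith [Real.exp_pos (-c * z), hk0.le]
      · exact hp
    have h6 : (k * Real.exp (-c * z)) ^ p = k ^ p * Real.exp (-c * z * p) := by
      rw [Real.mul_rpow hk0.le (Real.exp_pos _).le, ← Real.exp_mul]
    have h7 : Real.exp (-c * z) * Real.exp (-c * z * p) = Real.exp (c / a * z) := by
      rw [← Real.exp_add]
      congr 1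
      rw [hpdef]
      field_simp
      ring
    calc φ z = c * k / a * (Real.exp (-c * z) * b z ^ p) := hφ_alt z
      _ ≤ c * k / a * (Real.exp (-c * z) * (k ^ p * Real.exp (-c * z * p))) := by
          rw [← h6]
          apply mul_le_mul_of_nonneg_left _ (by positivity)
          exact mul_le_mul_of_nonneg_left h5 (Real.exp_pos _).le
      _ = C * Real.exp (c / a * z) := by rw [← h7, hCdef]; ring
  have hbound2 : ∀ z, φ z ^ 2 ≤ C ^ 2 * Real.exp (2 * (c / a) * z) := by
    intro z
    have h1 : φ z ^ 2 ≤ (C * Real.exp (c / a * z)) ^ 2 :=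
      pow_le_pow_left₀ (hφ_nonneg z) (hbound z) 2
    calc φ z ^ 2 ≤ (C * Real.exp (c / a * z)) ^ 2 := h1
      _ = C ^ 2 * Real.exp (2 * (c / a) * z) := by
          rw [mul_pow, sq (Real.exp _), ← Real.exp_add]
          ring_nf
  have hφcont : Continuous φ := by
    have hbc : Continuous b := by
      rw [hbdef]; fun_prop
    have h1 : Continuous fun z : ℝ => b z ^ (-(1 / a) - 1) :=
      hbc.rpow_const fun z => Or.inl (hbne z)
    rw [hφdef]
    fun_prop
  have hIic_int : IntegrableOn (fun z => φ z ^ 2) (Iic 0) := by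
    have hg : IntegrableOn (fun z : ℝ => C ^ 2 * Real.exp (2 * (c / a) * z)) (Iic 0) :=
      (exp_mul_integrableOn_Iic (by positivity)).const_mul (C ^ 2)
    apply Integrable.mono' hg ((hφcont.pow 2).aestronglyMeasurable.restrict)
    filter_upwards with z
    rw [Real.norm_eq_abs, abs_of_nonneg (sq_nonneg _)]
    exact hbound2 z
  have hIic_val : ∫ z in Iic 0, φ z ^ 2 = F 0 - 0 :=
    integral_Iic_of_hasDerivAt_of_tendsto' (fun x _ => hF x) hIic_int hFbot
  have hfeq : (fun z => (deriv u₀ z) ^ 2) = fun z => φ z ^ 2 :=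
    funext fun z => by rw [(hderiv z).deriv]
  have hint : Integrable (fun z => φ z ^ 2) := by
    rw [← integrableOn_univ, ← Set.Iic_union_Ioi (a := (0:ℝ))]
    exact hIic_int.union hIoi_int
  have hLval : L = c / (2 * (β + m + 1)) := by
    rw [hLdef, ha]
    have h1 : β + m - 1 ≠ 0 := by rw [← ha]; exact hane
    have h2 : β + m - 1 + 2 ≠ 0 := by rw [← ha]; exact ha2.ne'
    have h3 : β + m + 1 ≠ 0 := by intro h; apply h2; linarith [h]
    field_simp
    ring_nf
  constructor
  · rw [hfeq]; exact hint
  · calc ∫ z : ℝ, (deriv u₀ z) ^ 2 = ∫ z : ℝ, φ z ^ 2 := by rw [hfeq]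
      _ = (∫ z in Iic 0, φ z ^ 2) + ∫ z in Ioi 0, φ z ^ 2 :=
          (intervalIntegral.integral_Iic_add_Ioi hIic_int hIoi_int).symm
      _ = c / (2 * (β + m + 1)) := by rw [hIic_val, hIoi_val, ← hLval]; ring
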